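/- For every positive integer p, Σ_{k=1}^{p} (−1)^{k−1} · (2p)!/(2p+1−2k)! · ζ(2k)/π^{2k} = p/(2p+1), where ζ is the Riemann zeta function. -/

import Mathlib

open scoped BigOperators
open Real

noncomputable def zetaR (s : ℕ) : ℝ := ∑' n : ℕ, 1 / ((n : ℝ) + 1) ^ s
noncomputable def etaR (s : ℕ) : ℝ := ∑' n : ℕ, (-1 : ℝ) ^ n / ((n : ℝ) + 1) ^ s
noncomputable def betaR (s : ℕ) : ℝ := ∑' m : ℕ, (-1 : ℝ) ^ m / (2 * (m : ℝ) + 1) ^ s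

open PowerSeries Finset Nat

lemma rescale_two_X : rescale (2:ℚ) (X : ℚ⟦X⟧) = 2 * X := by
  ext n
  simp only [coeff_rescale, coeff_X]
  rw [show ((2:ℚ⟦X⟧)) = C (2:ℚ) by rw [map_ofNat], coeff_C_mul, coeff_X]
  split_ifs with h <;> simp [h]

lemma exp_sub_one_ne_zero : (exp ℚ - 1) ≠ 0 := by
  intro h
  have := congrArg (coeff 1) h
  simp [coeff_exp] at this

lemma key_ps : rescale (2:ℚ) (bernoulliPowerSeries ℚ) * (exp ℚ + 1) = 2 * bernoulliPowerSeries ℚ := by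
  have h := bernoulliPowerSeries_mul_exp_sub_one ℚ
  have h2 := congrArg (rescale (2:ℚ)) h
  rw [map_mul, map_sub, map_one, rescale_two_X] at h2
  have hexp : rescale (2:ℚ) (exp ℚ) = exp ℚ * exp ℚ := by
    have := exp_mul_exp_eq_exp_add (1:ℚ) 1
    norm_num [rescale_one] at this
    rw [← this]
  rw [hexp] at h2
  apply mul_right_cancel₀ exp_sub_one_ne_zero
  calc rescale (2:ℚ) (bernoulliPowerSeries ℚ) * (exp ℚ + 1) * (exp ℚ - 1)
      = rescale (2:ℚ) (bernoulliPowerSeries ℚ) * (exp ℚ * exp ℚ - 1) := by ring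
    _ = 2 * X := h2
    _ = 2 * (bernoulliPowerSeries ℚ * (exp ℚ - 1)) := by rw [h]
    _ = 2 * bernoulliPowerSeries ℚ * (exp ℚ - 1) := by ring

lemma sum_choose_two_pow (n : ℕ) :
    ∑ j ∈ range (n+1), (n.choose j : ℚ) * 2^j * bernoulli j = (2 - 2^n) * bernoulli n := by
  have hc := congrArg (coeff n) key_ps
  rw [show (2 : ℚ⟦X⟧) * bernoulliPowerSeries ℚ = C (2:ℚ) * bernoulliPowerSeries ℚ by
    rw [map_ofNat], coeff_C_mul, coeff_mul, Finset.Nat.sum_antidiagonal_eq_sum_range_succ_mk] at hc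
  simp only [coeff_rescale, bernoulliPowerSeries, coeff_mk, map_add, coeff_exp, coeff_one,
    Algebra.algebraMap_self, RingHom.id_apply] at hc
  have hsplit : ∑ i ∈ range (n+1), 2^i * (bernoulli i / i !) * ((1:ℚ)/(n-i)! + if n - i = 0 then 1 else 0)
      = (∑ i ∈ range (n+1), 2^i * (bernoulli i / i !) * (1/(n-i)!)) + 2^n * (bernoulli n / n !) := by
    simp_rw [mul_add, Finset.sum_add_distrib]
    congr 1
    rw [Finset.sum_congr rfl (fun i hi => ?_), Finset.sum_ite_eq' (range (n+1)) n
      (fun i => 2^i * (bernoulli i / i !)), if_pos (self_mem_range_succ n)]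
    rw [mem_range] at hi
    have : n - i = 0 ↔ i = n := by omega
    simp only [this]
    split_ifs with h <;> simp [h]
  rw [hsplit] at hc
  have hmain : ∑ i ∈ range (n+1), 2^i * (bernoulli i / i !) * ((1:ℚ)/(n-i)!)
      = 2 * (bernoulli n / n !) - 2^n * (bernoulli n / n !) := by linarith [hc]
  have := congrArg (fun x : ℚ => (n ! : ℚ) * x) hmain
  simp only [Finset.mul_sum] at this
  rw [Finset.sum_congr rfl (fun i hi => ?_)] at this
  · rw [this]
    have hn : (n ! : ℚ) ≠ 0 := mod_cast n.factorial_ne_zero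
    field_simp
  · rw [mem_range] at hi
    have hle : i ≤ n := by omega
    rw [Nat.cast_choose ℚ hle]
    have h1 : (i ! : ℚ) ≠ 0 := mod_cast i.factorial_ne_zero
    have h2 : ((n-i)! : ℚ) ≠ 0 := mod_cast (n-i).factorial_ne_zero
    field_simp

lemma sum_range_even_odd (f : ℕ → ℚ) (m : ℕ) :
    ∑ j ∈ range (2*m), f j = ∑ k ∈ range m, (f (2*k) + f (2*k+1)) := by
  induction m with
  | zero => simp
  | succ m ih =>
    rw [show 2*(m+1) = 2*m+1+1 by ring, Finset.sum_range_succ, Finset.sum_range_succ,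
      Finset.sum_range_succ, ih, add_assoc]

lemma bern_sum (p : ℕ) (hp : 0 < p) :
    ∑ k ∈ Finset.Icc 1 p, ((2*p+1).choose (2*k) : ℚ) * 4^k * bernoulli (2*k) = 2*p := by
  set g : ℕ → ℚ := fun j => ((2*p+1).choose j : ℚ) * 2^j * bernoulli j with hg
  have h := sum_choose_two_pow (2*p+1)
  have hodd : bernoulli (2*p+1) = 0 := by
    rw [bernoulli_eq_bernoulli'_of_ne_one (by omega)]
    exact bernoulli'_eq_zero_of_odd ⟨p, by ring⟩ (by omega)
  rw [hodd, mul_zero] at h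
  have hsplit := sum_range_even_odd g (p+1)
  rw [show 2*(p+1) = 2*p+1+1 by ring] at hsplit
  rw [hsplit, Finset.sum_add_distrib] at h
  have hoddsum : ∑ k ∈ range (p+1), g (2*k+1) = -(2*(p:ℚ)+1) := by
    rw [Finset.sum_eq_single_of_mem 0 (by simp)]
    · simp [hg, bernoulli_one]
      push_cast
      ring
    · intro b _ hb
      have : bernoulli (2*b+1) = 0 := by
        rw [bernoulli_eq_bernoulli'_of_ne_one (by omega)]
        exact bernoulli'_eq_zero_of_odd ⟨b, by ring⟩ (by omega)
      simp [hg, this]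
  have hg0 : g 0 = 1 := by simp [hg]
  have hevensum : ∑ k ∈ range (p+1), g (2*k) = 1 + ∑ k ∈ Finset.Icc 1 p, g (2*k) := by
    rw [Finset.sum_range_succ', ← Finset.Ico_add_one_right_eq_Icc, Finset.sum_Ico_eq_sum_range]
    simp only [Nat.add_sub_cancel, mul_zero, hg0]
    rw [add_comm]
    congr 1
    exact Finset.sum_congr rfl (fun i _ => by ring_nf)
  rw [hoddsum, hevensum] at h
  have : ∑ k ∈ Finset.Icc 1 p, g (2*k) = 2*p := by push_cast at h ⊢; linarith
  rw [← this]
  apply Finset.sum_congr rfl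
  intro k _
  simp only [hg]
  rw [show (4:ℚ)^k = 2^(2*k) by rw [pow_mul]; norm_num]

open Real in
lemma zetaR_eq (k : ℕ) (hk : k ≠ 0) :
    zetaR (2*k) = (-1:ℝ)^(k+1) * (2:ℝ)^(2*k-1) * π^(2*k) * bernoulli (2*k) / (2*k)! := by
  have h := hasSum_zeta_nat hk
  have h2 := (hasSum_nat_add_iff' (f := fun n : ℕ => 1/(n:ℝ)^(2*k)) 1).mpr h
  have h0 : ((0:ℝ))^(2*k) = 0 := zero_pow (by omega)
  simp only [Finset.range_one, Finset.sum_singleton, Nat.cast_zero, h0, div_zero, sub_zero] at h2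
  have h3 : HasSum (fun n : ℕ => 1 / ((n:ℝ)+1) ^ (2*k))
      ((-1:ℝ)^(k+1) * (2:ℝ)^(2*k-1) * π^(2*k) * bernoulli (2*k) / (2*k)!) := by
    convert h2 using 2 with n
    · rfl
    · push_cast; ring
  exact h3.tsum_eq

theorem stmt5 (p : ℕ) (hp : 0 < p) :
    ∑ k ∈ Finset.Icc 1 p, (-1 : ℝ) ^ (k - 1) *
        (((2 * p).factorial : ℝ) / ((2 * p + 1 - 2 * k).factorial : ℝ)) *
        (zetaR (2 * k) / π ^ (2 * k))
      = (p : ℝ) / (2 * (p : ℝ) + 1) := by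
  have hterm : ∀ k ∈ Finset.Icc 1 p, (-1 : ℝ) ^ (k - 1) *
        (((2 * p).factorial : ℝ) / ((2 * p + 1 - 2 * k).factorial : ℝ)) *
        (zetaR (2 * k) / π ^ (2 * k))
      = (((2*p+1).choose (2*k) : ℝ) * 4^k * (bernoulli (2*k) : ℝ)) / (2*(2*(p:ℝ)+1)) := by
    intro k hk
    rw [Finset.mem_Icc] at hk
    obtain ⟨hk1, hkp⟩ := hk
    have hz : zetaR (2*k) / π^(2*k) = (-1:ℝ)^(k+1) * 2^(2*k-1) * (bernoulli (2*k) : ℝ) / (2*k)! := by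
      rw [zetaR_eq k (by omega)]
      have hpi : (π:ℝ) ^ (2*k) ≠ 0 := pow_ne_zero _ pi_ne_zero
      field_simp
    rw [hz]
    have hsgn : (-1:ℝ)^(k-1) = (-1:ℝ)^(k+1) := by
      rw [show k+1 = (k-1)+2 by omega, pow_add]
      norm_num
    rw [hsgn]
    have hss : (-1:ℝ)^(k+1) * (-1:ℝ)^(k+1) = 1 := by
      rw [← pow_add, ← two_mul, pow_mul]
      norm_num
    have hchoose : ((2*p+1).choose (2*k) : ℝ) = ((2*p+1)! : ℝ) / (((2*k)! : ℝ) * ((2*p+1-2*k)! : ℝ)) :=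
      Nat.cast_choose ℝ (by omega)
    have hfact : ((2*p+1)! : ℝ) = (2*(p:ℝ)+1) * ((2*p)! : ℝ) := by
      rw [show 2*p+1 = (2*p)+1 from rfl, Nat.factorial_succ]
      push_cast; ring
    have h4 : (4:ℝ)^k = 2^(2*k-1) * 2 := by
      rw [show (4:ℝ) = 2^2 by norm_num, ← pow_mul, ← pow_succ]
      congr 1
      omega
    have h1 : ((2*k)! : ℝ) ≠ 0 := mod_cast (2*k).factorial_ne_zero
    have h2 : ((2*p+1-2*k)! : ℝ) ≠ 0 := mod_cast (2*p+1-2*k).factorial_ne_zero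
    have hp1 : (2*(p:ℝ)+1) ≠ 0 := by positivity
    calc (-1:ℝ)^(k+1) * (((2 * p).factorial : ℝ) / ((2 * p + 1 - 2 * k).factorial : ℝ)) *
          ((-1:ℝ)^(k+1) * 2^(2*k-1) * (bernoulli (2*k) : ℝ) / (2*k)!)
        = ((-1:ℝ)^(k+1) * (-1:ℝ)^(k+1)) * ((((2 * p)! : ℝ) / ((2 * p + 1 - 2 * k)! : ℝ)) *
            (2^(2*k-1) * (bernoulli (2*k) : ℝ) / (2*k)!)) := by ring
      _ = (((2 * p)! : ℝ) / ((2 * p + 1 - 2 * k)! : ℝ)) *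
            (2^(2*k-1) * (bernoulli (2*k) : ℝ) / (2*k)!) := by rw [hss, one_mul]
      _ = (((2*p+1).choose (2*k) : ℝ) * 4^k * (bernoulli (2*k) : ℝ)) / (2*(2*(p:ℝ)+1)) := by
          rw [hchoose, hfact, h4]
          field_simp
  rw [Finset.sum_congr rfl hterm, ← Finset.sum_div]
  have hcast : ∑ k ∈ Finset.Icc 1 p, (((2*p+1).choose (2*k) : ℝ) * 4^k * (bernoulli (2*k) : ℝ))
      = ((∑ k ∈ Finset.Icc 1 p, ((2*p+1).choose (2*k) : ℚ) * 4^k * bernoulli (2*k) : ℚ) : ℝ) := by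
    push_cast
    exact Finset.sum_congr rfl fun k _ => by ring
  rw [hcast, bern_sum p hp]
  have : (2*(p:ℝ)+1) ≠ 0 := by positivity
  push_cast
  field_simp
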